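/- Let 4 < β < 9/2 and let T : ℝ → ℝ be defined by T(x) = x + 2 if x ≤ 0 and T(x) = β − 2x if x > 0. Let μ be the measure on ℝ with density ρ with respect to Lebesgue measure, where ρ(x) = 1/27 for x ∈ (−β, 3β−16), ρ(x) = 1/18 for x ∈ (3β−16, 2−β), ρ(x) = 5/54 for x ∈ (2−β, 3β−14), ρ(x) = 1/9 for x ∈ (3β−14, 4−β), ρ(x) = 4/27 for x ∈ (4−β, β−4), ρ(x) = 2/9 for x ∈ (β−4, 6−β), ρ(x) = 7/27 for x ∈ (6−β, 2), ρ(x) = 1/9 for x ∈ (2, 8−β), ρ(x) = 2/27 for x ∈ (8−β, β), and ρ(x) = 0 otherwise. Then μ is a probability measure, μ is T-invariant, and μ([0, β]) = 2/3. -/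

import Mathlib

open MeasureTheory Set
open scoped ENNReal

noncomputable def Rm (a b : ℝ) : Measure ℝ := (volume : Measure ℝ).restrict (Set.Ioc a b)

lemma Rm_split {a b c : ℝ} (h1 : a ≤ b) (h2 : b ≤ c) : Rm a c = Rm a b + Rm b c := by
  unfold Rm
  rw [← Ioc_union_Ioc_eq_Ioc h1 h2, Measure.restrict_union (Ioc_disjoint_Ioc_of_le le_rfl) measurableSet_Ioc]

lemma Rm_map_add (a b c d : ℝ) (hc : c = a + 2) (hd : d = b + 2) :
    Measure.map (fun x => x + 2) (Rm a b) = Rm c d := by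
  subst hc hd
  have h : Ioc a b = (fun x : ℝ => x + 2) ⁻¹' Ioc (a + 2) (b + 2) := by
    ext x; simp only [mem_Ioc, mem_preimage]
    constructor <;> (rintro ⟨h1, h2⟩; constructor <;> linarith)
  unfold Rm
  rw [h, ← Measure.restrict_map (measurable_add_const 2) measurableSet_Ioc,
    map_add_right_eq_self]

lemma Rm_map_aff (β a b c d : ℝ) (hc : c = β - 2*b) (hd : d = β - 2*a) :
    Measure.map (fun x => β - 2*x) (Rm a b) = ENNReal.ofReal (1/2) • Rm c d := by
  subst hc hd
  have hm : Measurable (fun x : ℝ => β - 2*x) := by fun_prop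
  have h : Ioc a b = (fun x : ℝ => β - 2*x) ⁻¹' Ico (β - 2*b) (β - 2*a) := by
    ext x; simp only [mem_Ioc, mem_preimage, mem_Ico]
    constructor <;> (rintro ⟨h1, h2⟩; constructor <;> linarith)
  have hv : Measure.map (fun x : ℝ => β - 2*x) volume = ENNReal.ofReal (1/2) • volume := by
    have hcomp : (fun x : ℝ => β - 2*x) = (fun x : ℝ => x + β) ∘ (fun x : ℝ => (-2) * x) := by
      funext x; simp [Function.comp]; ring
    rw [hcomp, ← Measure.map_map (measurable_add_const β) (by fun_prop),
      Real.map_volume_mul_left (by norm_num : (-2:ℝ) ≠ 0), Measure.map_smul,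
      map_add_right_eq_self]
    norm_num [abs_of_pos]
  unfold Rm
  rw [h, ← Measure.restrict_map hm measurableSet_Ico, hv, Measure.restrict_smul,
    Measure.restrict_congr_set Ico_ae_eq_Ioc]

lemma Rm_univ (a b : ℝ) : Rm a b univ = ENNReal.ofReal (b - a) := by
  unfold Rm; rw [Measure.restrict_apply_univ, Real.volume_Ioc]

lemma Rm_apply (a b : ℝ) {s : Set ℝ} (hs : MeasurableSet s) : Rm a b s = volume (s ∩ Ioc a b) := by
  unfold Rm; rw [Measure.restrict_apply hs]

lemma wdRm (a b : ℝ) (c : ℝ≥0∞) :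
    volume.withDensity ((Ioo a b).indicator fun _ => c) = c • Rm a b := by
  unfold Rm
  rw [withDensity_indicator measurableSet_Ioo, withDensity_const,
    Measure.restrict_congr_set Ioo_ae_eq_Ioc]

lemma omerge (x y z : ℝ) (m : Measure ℝ) (hx : 0 ≤ x) (hy : 0 ≤ y) (h : x + y = z) :
    ENNReal.ofReal x • m + ENNReal.ofReal y • m = ENNReal.ofReal z • m := by
  rw [← add_smul, ← ENNReal.ofReal_add hx hy, h]

lemma osmul (x y z : ℝ) (m : Measure ℝ) (hy : 0 ≤ y) (h : y * x = z) :
    ENNReal.ofReal x • (ENNReal.ofReal y • m) = ENNReal.ofReal z • m := by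
  rw [smul_smul, mul_comm, ← ENNReal.ofReal_mul hy, h]

lemma omul2 (x y : ℝ) (hx : 0 ≤ x) :
    ENNReal.ofReal x * ENNReal.ofReal y = ENNReal.ofReal (x * y) :=
  (ENNReal.ofReal_mul hx).symm

lemma not_mem_Ioo_of_le {x a b c d : ℝ} (h : x ∈ Set.Ioo a b) (hle : b ≤ c) :
    x ∉ Set.Ioo c d := fun h' => absurd (h.2.trans_le hle) (not_lt.mpr h'.1.le)

lemma sum9 {p1 p2 p3 p4 p5 p6 p7 p8 p9 : ℝ} (h1 : 0 ≤ p1) (h2 : 0 ≤ p2) (h3 : 0 ≤ p3)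
    (h4 : 0 ≤ p4) (h5 : 0 ≤ p5) (h6 : 0 ≤ p6) (h7 : 0 ≤ p7) (h8 : 0 ≤ p8) (h9 : 0 ≤ p9) :
    ENNReal.ofReal p1 + (ENNReal.ofReal p2 + (ENNReal.ofReal p3 + (ENNReal.ofReal p4 +
      (ENNReal.ofReal p5 + (ENNReal.ofReal p6 + (ENNReal.ofReal p7 + (ENNReal.ofReal p8 +
      ENNReal.ofReal p9))))))) =
    ENNReal.ofReal (p1 + (p2 + (p3 + (p4 + (p5 + (p6 + (p7 + (p8 + p9)))))))) := by
  rw [← ENNReal.ofReal_add h8 h9, ← ENNReal.ofReal_add h7 (add_nonneg h8 h9),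
    ← ENNReal.ofReal_add h6 (add_nonneg h7 (add_nonneg h8 h9)),
    ← ENNReal.ofReal_add h5 (add_nonneg h6 (add_nonneg h7 (add_nonneg h8 h9))),
    ← ENNReal.ofReal_add h4 (add_nonneg h5 (add_nonneg h6 (add_nonneg h7 (add_nonneg h8 h9)))),
    ← ENNReal.ofReal_add h3 (add_nonneg h4 (add_nonneg h5 (add_nonneg h6 (add_nonneg h7 (add_nonneg h8 h9))))),
    ← ENNReal.ofReal_add h2 (add_nonneg h3 (add_nonneg h4 (add_nonneg h5 (add_nonneg h6 (add_nonneg h7 (add_nonneg h8 h9)))))),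
    ← ENNReal.ofReal_add h1 (add_nonneg h2 (add_nonneg h3 (add_nonneg h4 (add_nonneg h5 (add_nonneg h6 (add_nonneg h7 (add_nonneg h8 h9)))))))]

lemma sum5 {p1 p2 p3 p4 p5 : ℝ} (h1 : 0 ≤ p1) (h2 : 0 ≤ p2) (h3 : 0 ≤ p3)
    (h4 : 0 ≤ p4) (h5 : 0 ≤ p5) :
    ENNReal.ofReal p1 + (ENNReal.ofReal p2 + (ENNReal.ofReal p3 + (ENNReal.ofReal p4 +
      ENNReal.ofReal p5))) = ENNReal.ofReal (p1 + (p2 + (p3 + (p4 + p5)))) := by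
  rw [← ENNReal.ofReal_add h4 h5, ← ENNReal.ofReal_add h3 (add_nonneg h4 h5),
    ← ENNReal.ofReal_add h2 (add_nonneg h3 (add_nonneg h4 h5)),
    ← ENNReal.ofReal_add h1 (add_nonneg h2 (add_nonneg h3 (add_nonneg h4 h5)))]

set_option maxHeartbeats 2000000 in
theorem invariant_density_s_two_beta_four_ninehalves (β : ℝ) (hβ₁ : 4 < β) (hβ₂ : β < 9 / 2)
    (T : ℝ → ℝ) (hT : T = fun x => if x ≤ 0 then x + 2 else β - 2 * x)
    (ρ : ℝ → ENNReal)
    (hρ : ρ = fun x =>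
      if x ∈ Ioo (-β) (3 * β - 16) then ENNReal.ofReal (1 / 27)
      else if x ∈ Ioo (3 * β - 16) (2 - β) then ENNReal.ofReal (1 / 18)
      else if x ∈ Ioo (2 - β) (3 * β - 14) then ENNReal.ofReal (5 / 54)
      else if x ∈ Ioo (3 * β - 14) (4 - β) then ENNReal.ofReal (1 / 9)
      else if x ∈ Ioo (4 - β) (β - 4) then ENNReal.ofReal (4 / 27)
      else if x ∈ Ioo (β - 4) (6 - β) then ENNReal.ofReal (2 / 9)
      else if x ∈ Ioo (6 - β) 2 then ENNReal.ofReal (7 / 27)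
      else if x ∈ Ioo (2 : ℝ) (8 - β) then ENNReal.ofReal (1 / 9)
      else if x ∈ Ioo (8 - β) β then ENNReal.ofReal (2 / 27)
      else 0)
    (μ : Measure ℝ) (hμ : μ = volume.withDensity ρ) :
    IsProbabilityMeasure μ ∧ μ.map T = μ ∧ μ (Icc (0 : ℝ) β) = ENNReal.ofReal (2 / 3) := by
  have hsum : ρ = ((Ioo (-β) (3 * β - 16)).indicator fun _ => ENNReal.ofReal (1 / 27)) + (((Ioo (3 * β - 16) (2 - β)).indicator fun _ => ENNReal.ofReal (1 / 18)) + (((Ioo (2 - β) (3 * β - 14)).indicator fun _ => ENNReal.ofReal (5 / 54)) + (((Ioo (3 * β - 14) (4 - β)).indicator fun _ => ENNReal.ofReal (1 / 9)) + (((Ioo (4 - β) (β - 4)).indicator fun _ => ENNReal.ofReal (4 / 27)) + (((Ioo (β - 4) (6 - β)).indicator fun _ => ENNReal.ofReal (2 / 9)) + (((Ioo (6 - β) 2).indicator fun _ => ENNReal.ofReal (7 / 27)) + (((Ioo 2 (8 - β)).indicator fun _ => ENNReal.ofReal (1 / 9)) + ((Ioo (8 - β) β).indicator fun _ => ENNReal.ofReal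 (2 / 27))))))))) := by
    funext x
    rw [hρ]
    simp only [Pi.add_apply]
    by_cases h1 : x ∈ Ioo (-β) (3 * β - 16)
    · have n2 : x ∉ Ioo (3 * β - 16) (2 - β) := not_mem_Ioo_of_le h1 (by linarith)
      have n3 : x ∉ Ioo (2 - β) (3 * β - 14) := not_mem_Ioo_of_le h1 (by linarith)
      have n4 : x ∉ Ioo (3 * β - 14) (4 - β) := not_mem_Ioo_of_le h1 (by linarith)
      have n5 : x ∉ Ioo (4 - β) (β - 4) := not_mem_Ioo_of_le h1 (by linarith)
      have n6 : x ∉ Ioo (β - 4) (6 - β) := not_mem_Ioo_of_le h1 (by linarith)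
      have n7 : x ∉ Ioo (6 - β) 2 := not_mem_Ioo_of_le h1 (by linarith)
      have n8 : x ∉ Ioo 2 (8 - β) := not_mem_Ioo_of_le h1 (by linarith)
      have n9 : x ∉ Ioo (8 - β) β := not_mem_Ioo_of_le h1 (by linarith)
      simp [Set.indicator_apply, h1, n2, n3, n4, n5, n6, n7, n8, n9]
    by_cases h2 : x ∈ Ioo (3 * β - 16) (2 - β)
    · have n3 : x ∉ Ioo (2 - β) (3 * β - 14) := not_mem_Ioo_of_le h2 (by linarith)
      have n4 : x ∉ Ioo (3 * β - 14) (4 - β) := not_mem_Ioo_of_le h2 (by linarith)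
      have n5 : x ∉ Ioo (4 - β) (β - 4) := not_mem_Ioo_of_le h2 (by linarith)
      have n6 : x ∉ Ioo (β - 4) (6 - β) := not_mem_Ioo_of_le h2 (by linarith)
      have n7 : x ∉ Ioo (6 - β) 2 := not_mem_Ioo_of_le h2 (by linarith)
      have n8 : x ∉ Ioo 2 (8 - β) := not_mem_Ioo_of_le h2 (by linarith)
      have n9 : x ∉ Ioo (8 - β) β := not_mem_Ioo_of_le h2 (by linarith)
      simp [Set.indicator_apply, h1, h2, n3, n4, n5, n6, n7, n8, n9]
    by_cases h3 : x ∈ Ioo (2 - β) (3 * β - 14)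
    · have n4 : x ∉ Ioo (3 * β - 14) (4 - β) := not_mem_Ioo_of_le h3 (by linarith)
      have n5 : x ∉ Ioo (4 - β) (β - 4) := not_mem_Ioo_of_le h3 (by linarith)
      have n6 : x ∉ Ioo (β - 4) (6 - β) := not_mem_Ioo_of_le h3 (by linarith)
      have n7 : x ∉ Ioo (6 - β) 2 := not_mem_Ioo_of_le h3 (by linarith)
      have n8 : x ∉ Ioo 2 (8 - β) := not_mem_Ioo_of_le h3 (by linarith)
      have n9 : x ∉ Ioo (8 - β) β := not_mem_Ioo_of_le h3 (by linarith)
      simp [Set.indicator_apply, h1, h2, h3, n4, n5, n6, n7, n8, n9]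
    by_cases h4 : x ∈ Ioo (3 * β - 14) (4 - β)
    · have n5 : x ∉ Ioo (4 - β) (β - 4) := not_mem_Ioo_of_le h4 (by linarith)
      have n6 : x ∉ Ioo (β - 4) (6 - β) := not_mem_Ioo_of_le h4 (by linarith)
      have n7 : x ∉ Ioo (6 - β) 2 := not_mem_Ioo_of_le h4 (by linarith)
      have n8 : x ∉ Ioo 2 (8 - β) := not_mem_Ioo_of_le h4 (by linarith)
      have n9 : x ∉ Ioo (8 - β) β := not_mem_Ioo_of_le h4 (by linarith)
      simp [Set.indicator_apply, h1, h2, h3, h4, n5, n6, n7, n8, n9]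
    by_cases h5 : x ∈ Ioo (4 - β) (β - 4)
    · have n6 : x ∉ Ioo (β - 4) (6 - β) := not_mem_Ioo_of_le h5 (by linarith)
      have n7 : x ∉ Ioo (6 - β) 2 := not_mem_Ioo_of_le h5 (by linarith)
      have n8 : x ∉ Ioo 2 (8 - β) := not_mem_Ioo_of_le h5 (by linarith)
      have n9 : x ∉ Ioo (8 - β) β := not_mem_Ioo_of_le h5 (by linarith)
      simp [Set.indicator_apply, h1, h2, h3, h4, h5, n6, n7, n8, n9]
    by_cases h6 : x ∈ Ioo (β - 4) (6 - β)
    · have n7 : x ∉ Ioo (6 - β) 2 := not_mem_Ioo_of_le h6 (by linarith)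
      have n8 : x ∉ Ioo 2 (8 - β) := not_mem_Ioo_of_le h6 (by linarith)
      have n9 : x ∉ Ioo (8 - β) β := not_mem_Ioo_of_le h6 (by linarith)
      simp [Set.indicator_apply, h1, h2, h3, h4, h5, h6, n7, n8, n9]
    by_cases h7 : x ∈ Ioo (6 - β) 2
    · have n8 : x ∉ Ioo 2 (8 - β) := not_mem_Ioo_of_le h7 (by linarith)
      have n9 : x ∉ Ioo (8 - β) β := not_mem_Ioo_of_le h7 (by linarith)
      simp [Set.indicator_apply, h1, h2, h3, h4, h5, h6, h7, n8, n9]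
    by_cases h8 : x ∈ Ioo 2 (8 - β)
    · have n9 : x ∉ Ioo (8 - β) β := not_mem_Ioo_of_le h8 (by linarith)
      simp [Set.indicator_apply, h1, h2, h3, h4, h5, h6, h7, h8, n9]
    by_cases h9 : x ∈ Ioo (8 - β) β
    · simp [Set.indicator_apply, h1, h2, h3, h4, h5, h6, h7, h8, h9]
    simp [Set.indicator_apply, h1, h2, h3, h4, h5, h6, h7, h8, h9]
  have hμν : μ = ENNReal.ofReal (1 / 27) • Rm (-β) (3 * β - 16) + (ENNReal.ofReal (1 / 18) • Rm (3 * β - 16) (2 - β) + (ENNReal.ofReal (5 / 54) • Rm (2 - β) (3 * β - 14) + (ENNReal.ofReal (1 / 9) • Rm (3 * β - 14) (4 - β) + (ENNReal.ofReal (4 / 27) • Rm (4 - β) (β - 4) + (ENNReal.ofReal (2 / 9) • Rm (β - 4) (6 - β) + (ENNReal.ofReal (7 / 27) • Rm (6 - β) 2 + (ENNReal.ofReal (1 / 9) • Rm 2 (8 - β) + ENNReal.ofReal (2 / 27) • Rm (8 - β) β))))))) := by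
    rw [hμ, hsum]
    rw [withDensity_add_left ((measurable_const).indicator measurableSet_Ioo), withDensity_add_left ((measurable_const).indicator measurableSet_Ioo), withDensity_add_left ((measurable_const).indicator measurableSet_Ioo), withDensity_add_left ((measurable_const).indicator measurableSet_Ioo), withDensity_add_left ((measurable_const).indicator measurableSet_Ioo), withDensity_add_left ((measurable_const).indicator measurableSet_Ioo), withDensity_add_left ((measurable_const).indicator measurableSet_Ioo), withDensity_add_left ((measurable_const).indicator measurableSet_Ioo)]
    simp only [wdRm]
  have hTm : Measurable T := by
    rw [hT]
    exact Measurable.ite measurableSet_Iic (by fun_prop) (by fun_prop)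
  have mapneg : ∀ a b c d : ℝ, b ≤ 0 → c = a + 2 → d = b + 2 →
      Measure.map T (Rm a b) = Rm c d := by
    intro a b c d hb hc hd
    have hae : T =ᵐ[Rm a b] fun x => x + 2 := by
      unfold Rm
      filter_upwards [ae_restrict_mem measurableSet_Ioc] with x hx
      simp [hT, hx.2.trans hb]
    rw [Measure.map_congr hae, Rm_map_add a b c d hc hd]
  have mappos : ∀ a b c d : ℝ, 0 ≤ a → c = β - 2*b → d = β - 2*a →
      Measure.map T (Rm a b) = ENNReal.ofReal (1/2) • Rm c d := by
    intro a b c d ha hc hd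
    have hae : T =ᵐ[Rm a b] fun x => β - 2*x := by
      unfold Rm
      filter_upwards [ae_restrict_mem measurableSet_Ioc] with x hx
      have hx0 : ¬ x ≤ 0 := not_le.mpr (lt_of_le_of_lt ha hx.1)
      simp [hT, hx0]
    rw [Measure.map_congr hae, Rm_map_aff β a b c d hc hd]
  have hmap : Measure.map T (ENNReal.ofReal (1 / 27) • Rm (-β) (3 * β - 16) + (ENNReal.ofReal (1 / 18) • Rm (3 * β - 16) (2 - β) + (ENNReal.ofReal (5 / 54) • Rm (2 - β) (3 * β - 14) + (ENNReal.ofReal (1 / 9) • Rm (3 * β - 14) (4 - β) + (ENNReal.ofReal (4 / 27) • Rm (4 - β) (β - 4) + (ENNReal.ofReal (2 / 9) • Rm (β - 4) (6 - β) + (ENNReal.ofReal (7 / 27) • Rm (6 - β) 2 + (ENNReal.ofReal (1 / 9) • Rm 2 (8 - β) + ENNReal.ofReal (2 / 27) • Rm (8 - β) β)))))))) = ENNReal.ofReal (1 / 27) • Rm (-β) (3 * β - 16) + (ENNReal.ofReal (1 / 18) • Rm (3 * β - 16) (2 - β) + (ENNReal.ofReal (5 / 54) • Rm (2 - β) (3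 * β - 14) + (ENNReal.ofReal (1 / 9) • Rm (3 * β - 14) (4 - β) + (ENNReal.ofReal (4 / 27) • Rm (4 - β) (β - 4) + (ENNReal.ofReal (2 / 9) • Rm (β - 4) (6 - β) + (ENNReal.ofReal (7 / 27) • Rm (6 - β) 2 + (ENNReal.ofReal (1 / 9) • Rm 2 (8 - β) + ENNReal.ofReal (2 / 27) • Rm (8 - β) β))))))) := by
    have h5s : (ENNReal.ofReal (1 / 27) • Rm (-β) (3 * β - 16) + (ENNReal.ofReal (1 / 18) • Rm (3 * β - 16) (2 - β) + (ENNReal.ofReal (5 / 54) • Rm (2 - β) (3 * β - 14) + (ENNReal.ofReal (1 / 9) • Rm (3 * β - 14) (4 - β) + (ENNReal.ofReal (4 / 27) • Rm (4 - β) (β - 4) + (ENNReal.ofReal (2 / 9) • Rm (β - 4) (6 - β) + (ENNReal.ofReal (7 / 27) • Rm (6 - β) 2 + (ENNReal.ofReal (1 / 9) • Rm 2 (8 - β) + ENNReal.ofReal (2 / 27) • Rm (8 - β) β)))))))) = (ENNReal.ofReal (1 / 27) • Rm (-β) (3 * β - 16) + (ENNReal.ofReal (1 / 18) • Rm (3 *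 β - 16) (2 - β) + (ENNReal.ofReal (5 / 54) • Rm (2 - β) (3 * β - 14) + (ENNReal.ofReal (1 / 9) • Rm (3 * β - 14) (4 - β) + ((ENNReal.ofReal (4 / 27) • Rm (4 - β) 0 + ENNReal.ofReal (4 / 27) • Rm 0 (β - 4)) + (ENNReal.ofReal (2 / 9) • Rm (β - 4) (6 - β) + (ENNReal.ofReal (7 / 27) • Rm (6 - β) 2 + (ENNReal.ofReal (1 / 9) • Rm 2 (8 - β) + ENNReal.ofReal (2 / 27) • Rm (8 - β) β)))))))) := by
      rw [Rm_split (show (4:ℝ) - β ≤ 0 by linarith) (show (0:ℝ) ≤ β - 4 by linarith), smul_add]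
    conv_lhs => rw [h5s]
    rw [Measure.map_add _ _ hTm, Measure.map_add _ _ hTm, Measure.map_add _ _ hTm, Measure.map_add _ _ hTm, Measure.map_add _ _ hTm, Measure.map_add _ _ hTm, Measure.map_add _ _ hTm, Measure.map_add _ _ hTm, Measure.map_add _ _ hTm]
    simp only [Measure.map_smul]
    rw [mapneg (-β) (3 * β - 16) (2 - β) (3 * β - 14) (by linarith) (by ring) (by ring),
      mapneg (3 * β - 16) (2 - β) (3 * β - 14) (4 - β) (by linarith) (by ring) (by ring),
      mapneg (2 - β) (3 * β - 14) (4 - β) (3 * β - 12) (by linarith) (by ring) (by ring),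
      mapneg (3 * β - 14) (4 - β) (3 * β - 12) (6 - β) (by linarith) (by ring) (by ring),
      mapneg (4 - β) 0 (6 - β) 2 (by linarith) (by ring) (by ring),
      mappos 0 (β - 4) (8 - β) β (by linarith) (by ring) (by ring),
      mappos (β - 4) (6 - β) (3 * β - 12) (8 - β) (by linarith) (by ring) (by ring),
      mappos (6 - β) 2 (β - 4) (3 * β - 12) (by linarith) (by ring) (by ring),
      mappos 2 (8 - β) (3 * β - 16) (β - 4) (by linarith) (by ring) (by ring),
      mappos (8 - β) β (-β) (3 * β - 16) (by linarith) (by ring) (by ring)]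
    rw [osmul (4 / 27) (1/2) (2 / 27) _ (by norm_num) (by norm_num), osmul (2 / 9) (1/2) (1 / 9) _ (by norm_num) (by norm_num), osmul (7 / 27) (1/2) (7 / 54) _ (by norm_num) (by norm_num), osmul (1 / 9) (1/2) (1 / 18) _ (by norm_num) (by norm_num), osmul (2 / 27) (1/2) (1 / 27) _ (by norm_num) (by norm_num)]
    rw [Rm_split (show (4:ℝ) - β ≤ β - 4 by linarith) (show (β:ℝ) - 4 ≤ 3 * β - 12 by linarith)]
    rw [Rm_split (show (3:ℝ) * β - 12 ≤ 2 by linarith) (show (2:ℝ) ≤ 8 - β by linarith)]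
    rw [Rm_split (show (3:ℝ) * β - 12 ≤ 6 - β by linarith) (show (6:ℝ) - β ≤ 2 by linarith)]
    rw [Rm_split (show (3:ℝ) * β - 16 ≤ 2 - β by linarith) (show (2:ℝ) - β ≤ β - 4 by linarith)]
    rw [Rm_split (show (2:ℝ) - β ≤ 3 * β - 14 by linarith) (show (3:ℝ) * β - 14 ≤ β - 4 by linarith)]
    rw [Rm_split (show (3:ℝ) * β - 14 ≤ 4 - β by linarith) (show (4:ℝ) - β ≤ β - 4 by linarith)]
    simp only [smul_add]
    have hG : (ENNReal.ofReal (1 / 27) • Rm (-β) (3 * β - 16) + (ENNReal.ofReal (1 / 18) • Rm (3 * β - 16) (2 - β) + ((ENNReal.ofReal (1 / 27) • Rm (2 - β) (3 * β - 14) + ENNReal.ofReal (1 / 18) • Rm (2 - β) (3 * β - 14)) + ((ENNReal.ofReal (1 / 18) • Rm (3 * β - 14) (4 - β) + ENNReal.ofReal (1 / 18) • Rm (3 * β - 14) (4 - β)) + ((ENNReal.ofReal (5 / 54) • Rm (4 - β) (β - 4) + ENNReal.ofReal (1 / 18) • Rm (4 - β) (β - 4)) + (((ENNReal.ofReal (5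 / 54) • Rm (β - 4) (3 * β - 12) + ENNReal.ofReal (7 / 54) • Rm (β - 4) (3 * β - 12)) + (ENNReal.ofReal (1 / 9) • Rm (3 * β - 12) (6 - β) + ENNReal.ofReal (1 / 9) • Rm (3 * β - 12) (6 - β))) + ((ENNReal.ofReal (4 / 27) • Rm (6 - β) 2 + ENNReal.ofReal (1 / 9) • Rm (6 - β) 2) + (ENNReal.ofReal (1 / 9) • Rm 2 (8 - β) + ENNReal.ofReal (2 / 27) • Rm (8 - β) β)))))))) = (ENNReal.ofReal (1 / 27) • Rm (-β) (3 * β - 16) + (ENNReal.ofReal (1 / 18) • Rm (3 * β - 16) (2 - β) + (ENNReal.ofReal (5 / 54) • Rm (2 - β) (3 * β - 14) + (ENNReal.ofReal (1 / 9) • Rm (3 * β - 14) (4 - β) + (ENNReal.ofReal (4 / 27) • Rm (4 - β) (β - 4) + (ENNReal.ofReal (2 / 9) • Rm (β - 4) (6 - β) + (ENNReal.ofReal (7 / 27) • Rm (6 - β) 2 + (ENNReal.ofReal (1 / 9) • Rm 2 (8 - β) + ENNReal.ofReal (2 / 27) • Rm (8 - β) β)))))))) := by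
      rw [omerge (1 / 27) (1 / 18) (5 / 54) _ (by norm_num) (by norm_num) (by norm_num),
        omerge (1 / 18) (1 / 18) (1 / 9) _ (by norm_num) (by norm_num) (by norm_num),
        omerge (5 / 54) (1 / 18) (4 / 27) _ (by norm_num) (by norm_num) (by norm_num),
        omerge (5 / 54) (7 / 54) (2 / 9) _ (by norm_num) (by norm_num) (by norm_num),
        omerge (1 / 9) (1 / 9) (2 / 9) _ (by norm_num) (by norm_num) (by norm_num),
        omerge (4 / 27) (1 / 9) (7 / 27) _ (by norm_num) (by norm_num) (by norm_num)]
      rw [← smul_add, ← Rm_split (show (β:ℝ) - 4 ≤ 3 * β - 12 by linarith) (show (3:ℝ) * β - 12 ≤ 6 - β by linarith)]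
    rw [← hG]
    abel
  have huniv : μ univ = 1 := by
    rw [hμν]
    simp only [Measure.add_apply, Measure.smul_apply, smul_eq_mul, Rm_univ]
    rw [omul2 (1 / 27) _ (by norm_num), omul2 (1 / 18) _ (by norm_num), omul2 (5 / 54) _ (by norm_num), omul2 (1 / 9) _ (by norm_num), omul2 (4 / 27) _ (by norm_num), omul2 (2 / 9) _ (by norm_num), omul2 (7 / 27) _ (by norm_num), omul2 (1 / 9) _ (by norm_num), omul2 (2 / 27) _ (by norm_num)]
    rw [sum9 (by nlinarith) (by nlinarith) (by nlinarith) (by nlinarith) (by nlinarith) (by nlinarith) (by nlinarith) (by nlinarith) (by nlinarith)]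
    rw [← ENNReal.ofReal_one]
    congr 1
    ring
  have hIcc : μ (Icc (0 : ℝ) β) = ENNReal.ofReal (2 / 3) := by
    rw [hμν]
    simp only [Measure.add_apply, Measure.smul_apply, smul_eq_mul, Rm_apply _ _ measurableSet_Icc]
    have e1 : Icc (0 : ℝ) β ∩ Ioc (-β) (3 * β - 16) = ∅ := by
      rw [eq_empty_iff_forall_notMem]
      rintro x ⟨⟨hx1, hx2⟩, hx3, hx4⟩
      linarith
    have e2 : Icc (0 : ℝ) β ∩ Ioc (3 * β - 16) (2 - β) = ∅ := by
      rw [eq_empty_iff_forall_notMem]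
      rintro x ⟨⟨hx1, hx2⟩, hx3, hx4⟩
      linarith
    have e3 : Icc (0 : ℝ) β ∩ Ioc (2 - β) (3 * β - 14) = ∅ := by
      rw [eq_empty_iff_forall_notMem]
      rintro x ⟨⟨hx1, hx2⟩, hx3, hx4⟩
      linarith
    have e4 : Icc (0 : ℝ) β ∩ Ioc (3 * β - 14) (4 - β) = ∅ := by
      rw [eq_empty_iff_forall_notMem]
      rintro x ⟨⟨hx1, hx2⟩, hx3, hx4⟩
      linarith
    have e5 : Icc (0 : ℝ) β ∩ Ioc (4 - β) (β - 4) = Icc 0 (β - 4) := by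
      ext x
      simp only [mem_inter_iff, mem_Icc, mem_Ioc]
      constructor
      · rintro ⟨⟨hx1, hx2⟩, hx3, hx4⟩; exact ⟨hx1, hx4⟩
      · rintro ⟨hx1, hx2⟩; exact ⟨⟨hx1, by linarith⟩, by linarith, hx2⟩
    have e6 : Icc (0 : ℝ) β ∩ Ioc (β - 4) (6 - β) = Ioc (β - 4) (6 - β) := by
      rw [inter_eq_right]
      rintro x ⟨hx1, hx2⟩
      exact ⟨by linarith, by linarith⟩
    have e7 : Icc (0 : ℝ) β ∩ Ioc (6 - β) 2 = Ioc (6 - β) 2 := by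
      rw [inter_eq_right]
      rintro x ⟨hx1, hx2⟩
      exact ⟨by linarith, by linarith⟩
    have e8 : Icc (0 : ℝ) β ∩ Ioc 2 (8 - β) = Ioc 2 (8 - β) := by
      rw [inter_eq_right]
      rintro x ⟨hx1, hx2⟩
      exact ⟨by linarith, by linarith⟩
    have e9 : Icc (0 : ℝ) β ∩ Ioc (8 - β) β = Ioc (8 - β) β := by
      rw [inter_eq_right]
      rintro x ⟨hx1, hx2⟩
      exact ⟨by linarith, by linarith⟩
    rw [e1, e2, e3, e4, e5, e6, e7, e8, e9]
    simp only [measure_empty, mul_zero, zero_add, Real.volume_Icc, Real.volume_Ioc]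
    rw [omul2 (4 / 27) _ (by norm_num), omul2 (2 / 9) _ (by norm_num), omul2 (7 / 27) _ (by norm_num), omul2 (1 / 9) _ (by norm_num), omul2 (2 / 27) _ (by norm_num)]
    rw [sum5 (by nlinarith) (by nlinarith) (by nlinarith) (by nlinarith) (by nlinarith)]
    congr 1
    ring
  refine ⟨⟨huniv⟩, ?_, hIcc⟩
  rw [hμν]
  exact hmap
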